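/- Let Z_1, ..., Z_p be nonnegative random variables with Σ_j Z_j > 0 almost surely, and let ρ_1, ..., ρ_p ≥ 0 with maximum attained at index k_0 (i.e. ρ_{k_0} = max_j ρ_j > 0). Suppose that P(Σ_j ρ_j Z_j < ρ_{k_0} Σ_j Z_j) = 1 (e.g. some index m with ρ_m < ρ_{k_0} has Z_m > 0 a.s.) and that P(Z_{k_0} > 0) > 0. Then E[ρ_{k_0} Z_{k_0} / Σ_j ρ_j Z_j] > E[Z_{k_0} / Σ_j Z_j]. -/

import Mathlib

open MeasureTheory

theorem weighted_ratio_expectation_gt {Ω : Type*} [MeasurableSpace Ω]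
    (P : Measure Ω) [IsProbabilityMeasure P]
    (p : ℕ) (Z : Fin p → Ω → ℝ) (hmeas : ∀ i, Measurable (Z i))
    (hZ0 : ∀ i, ∀ᵐ ω ∂P, 0 ≤ Z i ω)
    (hZsum : ∀ᵐ ω ∂P, 0 < ∑ j, Z j ω)
    (ρ : Fin p → ℝ) (hρ : ∀ i, 0 ≤ ρ i) (k0 : Fin p)
    (hmax : ∀ j, ρ j ≤ ρ k0) (hρpos : 0 < ρ k0)
    (hstrict : ∀ᵐ ω ∂P, ∑ j, ρ j * Z j ω < ρ k0 * ∑ j, Z j ω)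
    (hZk0 : 0 < P {ω | 0 < Z k0 ω}) :
    (∫ ω, Z k0 ω / ∑ j, Z j ω ∂P) <
      ∫ ω, ρ k0 * Z k0 ω / ∑ j, ρ j * Z j ω ∂P := by
  set f : Ω → ℝ := fun ω => Z k0 ω / ∑ j, Z j ω with hf
  set g : Ω → ℝ := fun ω => ρ k0 * Z k0 ω / ∑ j, ρ j * Z j ω with hg
  have hSmeas : Measurable fun ω => ∑ j, Z j ω := by
    exact Finset.measurable_sum _ fun i _ => hmeas i
  have hSρmeas : Measurable fun ω => ∑ j, ρ j * Z j ω := by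
    exact Finset.measurable_sum _ fun i _ => (hmeas i).const_mul _
  have hfm : Measurable f := (hmeas k0).div hSmeas
  have hgm : Measurable g := ((hmeas k0).const_mul _).div hSρmeas
  have hall : ∀ᵐ ω ∂P, ∀ i, 0 ≤ Z i ω := (ae_all_iff).2 hZ0
  -- key pointwise facts
  have hkey : ∀ᵐ ω ∂P, f ω ≤ g ω ∧ (0 < Z k0 ω → f ω < g ω) := by
    filter_upwards [hall, hZsum, hstrict] with ω h0 hS hlt
    rcases eq_or_lt_of_le (h0 k0) with hz | hz
    · constructor
      · simp [hf, hg, ← hz]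
      · intro h; rw [← hz] at h; exact absurd h (lt_irrefl 0)
    · have hSρpos : 0 < ∑ j, ρ j * Z j ω := by
        have hle : ρ k0 * Z k0 ω ≤ ∑ j, ρ j * Z j ω :=
          Finset.single_le_sum (fun i _ => mul_nonneg (hρ i) (h0 i)) (Finset.mem_univ k0)
        exact lt_of_lt_of_le (mul_pos hρpos hz) hle
      have hnum : 0 < ρ k0 * Z k0 ω := mul_pos hρpos hz
      have hstep : f ω = ρ k0 * Z k0 ω / (ρ k0 * ∑ j, Z j ω) := by
        rw [hf, mul_div_mul_left _ _ (ne_of_gt hρpos)]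
      have hlt2 : f ω < g ω := by
        rw [hstep, hg]
        exact div_lt_div_of_pos_left hnum hSρpos hlt
      exact ⟨le_of_lt hlt2, fun _ => hlt2⟩
  -- integrability via bound 1
  have hfb : ∀ᵐ ω ∂P, ‖f ω‖ ≤ 1 := by
    filter_upwards [hall, hZsum] with ω h0 hS
    rw [Real.norm_eq_abs, abs_of_nonneg (div_nonneg (h0 k0) hS.le)]
    rw [div_le_one hS]
    exact Finset.single_le_sum (fun i _ => h0 i) (Finset.mem_univ k0)
  have hgb : ∀ᵐ ω ∂P, ‖g ω‖ ≤ 1 := by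
    filter_upwards [hall] with ω h0
    have hnum : 0 ≤ ρ k0 * Z k0 ω := mul_nonneg hρpos.le (h0 k0)
    have hden : 0 ≤ ∑ j, ρ j * Z j ω :=
      Finset.sum_nonneg fun i _ => mul_nonneg (hρ i) (h0 i)
    rw [Real.norm_eq_abs, abs_of_nonneg (div_nonneg hnum hden)]
    rcases eq_or_lt_of_le hden with hd | hd
    · simp [hg, ← hd]
    · rw [div_le_one hd]
      exact Finset.single_le_sum (fun i _ => mul_nonneg (hρ i) (h0 i)) (Finset.mem_univ k0)
  have hfi : Integrable f P :=
    (integrable_const (1 : ℝ)).mono' hfm.aestronglyMeasurable hfb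
  have hgi : Integrable g P :=
    (integrable_const (1 : ℝ)).mono' hgm.aestronglyMeasurable hgb
  -- reduce to positivity of integral of g - f
  have hsub : 0 < ∫ ω, (g ω - f ω) ∂P := by
    have hnn : 0 ≤ᵐ[P] fun ω => g ω - f ω := by
      filter_upwards [hkey] with ω h
      exact sub_nonneg.2 h.1
    have hint : Integrable (fun ω => g ω - f ω) P := hgi.sub hfi
    rw [integral_pos_iff_support_of_nonneg_ae hnn hint]
    have hnull : P ({ω | 0 < Z k0 ω} \ Function.support fun ω => g ω - f ω) = 0 := by
      rw [measure_eq_zero_iff_ae_notMem]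
      filter_upwards [hkey] with ω h hmem
      exact hmem.2 (ne_of_gt (sub_pos.2 (h.2 hmem.1)))
    calc (0 : ENNReal) < P {ω | 0 < Z k0 ω} := hZk0
      _ = P ({ω | 0 < Z k0 ω} ∩ Function.support fun ω => g ω - f ω) := by
          rw [← measure_inter_add_diff _ (measurableSet_support (f := fun ω => g ω - f ω) (hgm.sub hfm)), hnull, add_zero]
      _ ≤ P (Function.support fun ω => g ω - f ω) :=
          measure_mono Set.inter_subset_right
  rw [integral_sub hgi hfi] at hsub
  show (∫ ω, f ω ∂P) < ∫ ω, g ω ∂P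
  linarith
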